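/- Let d and s be natural numbers, let α₀,…,α_d be natural numbers with α₀ + ⋯ + α_d = 2s+1, and let γ₀,…,γ_d be real numbers. Then 2^{2s} · ∏_{i=0}^{d} ( α_i! · C(α_i+γ_i, α_i) ) = Σ_{j=0}^{s} (−1)^j · C( d + Σ_{i=0}^{d}(α_i+γ_i), j ) · Σ_{β₀+⋯+β_d = s−j} ∏_{i=0}^{d} C(β_i+γ_i, β_i) · (2β_i+γ_i+1)^{α_i}, where the inner sum ranges over all tuples (β₀,…,β_d) of natural numbers with β₀+⋯+β_d = s−j. -/

import Mathlib

set_option maxRecDepth 8000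

/-- The generalized binomial coefficient `C(x,k) = x(x-1)⋯(x-k+1)/k!` for real `x`. -/
noncomputable def genChoose (x : ℝ) (k : ℕ) : ℝ :=
  (∏ i ∈ Finset.range k, (x - i)) / (k.factorial : ℝ)

open PowerSeries Finset

/-- The formal power series `(1-X)^{-c}` for real `c`. -/
noncomputable def Sser (c : ℝ) : PowerSeries ℝ :=
  PowerSeries.mk fun n => (∏ i ∈ Finset.range n, (c + i)) / n.factorial

@[simp] lemma coeff_Sser (c : ℝ) (n : ℕ) :
    PowerSeries.coeff (R := ℝ) n (Sser c) = (∏ i ∈ Finset.range n, (c + i)) / n.factorial := by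
  simp [Sser]

lemma Sser_eq (c : ℝ) : Sser c = (1 - PowerSeries.X) * Sser (c + 1) := by
  ext n
  rw [sub_mul, one_mul]
  cases n with
  | zero => simp [Sser]
  | succ n =>
    rw [map_sub, PowerSeries.coeff_succ_X_mul]
    simp only [coeff_Sser]
    rw [Finset.prod_range_succ' (fun i => c + (i : ℝ)), Finset.prod_range_succ]
    have hne : ((n + 1).factorial : ℝ) ≠ 0 := Nat.cast_ne_zero.mpr (Nat.factorial_ne_zero _)
    have hne' : ((n).factorial : ℝ) ≠ 0 := Nat.cast_ne_zero.mpr (Nat.factorial_ne_zero _)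
    rw [Nat.factorial_succ]
    have hprod : ∏ x ∈ range n, (c + ((x:ℝ) + 1)) = ∏ x ∈ range n, (c + 1 + (x:ℝ)) :=
      Finset.prod_congr rfl fun x _ => by ring
    push_cast
    field_simp
    rw [hprod]
    ring

lemma Sser_deriv (c : ℝ) :
    PowerSeries.derivative ℝ (Sser c) = PowerSeries.C (R := ℝ) c * Sser (c + 1) := by
  ext n
  rw [PowerSeries.coeff_derivative, PowerSeries.coeff_C_mul]
  simp only [coeff_Sser]
  rw [Finset.prod_range_succ' (fun i => c + (i : ℝ)), Nat.factorial_succ]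
  have hne' : ((n).factorial : ℝ) ≠ 0 := Nat.cast_ne_zero.mpr (Nat.factorial_ne_zero _)
  have hprod : ∏ x ∈ range n, (c + ((x:ℝ) + 1)) = ∏ x ∈ range n, (c + 1 + (x:ℝ)) :=
    Finset.prod_congr rfl fun x _ => by ring
  push_cast
  field_simp
  rw [hprod]
  ring

-- coefficient of X * derivative
lemma coeff_X_mul_deriv (F : PowerSeries ℝ) (n : ℕ) :
    PowerSeries.coeff (R := ℝ) n (PowerSeries.X * PowerSeries.derivative ℝ F) =
      n * PowerSeries.coeff (R := ℝ) n F := by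
  cases n with
  | zero => simp
  | succ n =>
    rw [PowerSeries.coeff_succ_X_mul, PowerSeries.coeff_derivative]
    push_cast; ring

lemma Sser_ode (c : ℝ) :
    (1 - PowerSeries.X) * PowerSeries.derivative ℝ (Sser c) = PowerSeries.C (R := ℝ) c * Sser c := by
  rw [Sser_deriv, mul_left_comm, ← Sser_eq]

lemma Sser_unique (c : ℝ) (F : PowerSeries ℝ)
    (h : (1 - PowerSeries.X) * PowerSeries.derivative ℝ F = PowerSeries.C (R := ℝ) c * F)
    (h0 : PowerSeries.coeff (R := ℝ) 0 F = 1) : F = Sser c := by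
  ext n
  induction n with
  | zero => simpa using h0
  | succ n ih =>
    have hc := congrArg (PowerSeries.coeff (R := ℝ) n) h
    rw [sub_mul, one_mul, map_sub, coeff_X_mul_deriv, PowerSeries.coeff_derivative,
      PowerSeries.coeff_C_mul] at hc
    have hne : ((n + 1 : ℕ) : ℝ) ≠ 0 := by positivity
    have : PowerSeries.coeff (R := ℝ) (n+1) F = (c + n) * PowerSeries.coeff (R := ℝ) n F / (n+1) := by
      field_simp at hc ⊢
      linarith [hc]
    rw [this, ih, coeff_Sser, coeff_Sser, Finset.prod_range_succ, Nat.factorial_succ]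
    have hne' : ((n).factorial : ℝ) ≠ 0 := Nat.cast_ne_zero.mpr (Nat.factorial_ne_zero _)
    push_cast
    field_simp

lemma Sser_mul (a b : ℝ) : Sser a * Sser b = Sser (a + b) := by
  apply Sser_unique
  · rw [Derivation.leibniz, smul_eq_mul, smul_eq_mul, mul_add]
    have h1 : (1 - PowerSeries.X) * (Sser a * PowerSeries.derivative ℝ (Sser b))
        = Sser a * (PowerSeries.C (R := ℝ) b * Sser b) := by
      rw [← mul_assoc, mul_comm (1 - PowerSeries.X), mul_assoc, Sser_ode]
    have h2 : (1 - PowerSeries.X) * (Sser b * PowerSeries.derivative ℝ (Sser a))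
        = Sser b * (PowerSeries.C (R := ℝ) a * Sser a) := by
      rw [← mul_assoc, mul_comm (1 - PowerSeries.X), mul_assoc, Sser_ode]
    rw [h1, h2, map_add]
    ring
  · simp [Sser, PowerSeries.coeff_zero_eq_constantCoeff]

lemma Sser_zero : Sser 0 = 1 := by
  ext n
  cases n with
  | zero => simp
  | succ n =>
    rw [coeff_Sser]
    rw [Finset.prod_range_succ' (fun i => (0:ℝ) + (i : ℝ))]
    simp

lemma Sser_prod {ι : Type*} (t : Finset ι) (f : ι → ℝ) :
    ∏ i ∈ t, Sser (f i) = Sser (∑ i ∈ t, f i) := by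
  induction t using Finset.cons_induction with
  | empty => simp [Sser_zero]
  | cons a t ha ih => rw [Finset.prod_cons, Finset.sum_cons, ih, Sser_mul]

lemma Sser_neg_nat (k : ℕ) : Sser (-(k : ℝ)) = (1 - PowerSeries.X) ^ k := by
  induction k with
  | zero => simpa using Sser_zero
  | succ k ih =>
    have := Sser_eq (-((k:ℕ)+1 : ℝ))
    rw [show (-((k:ℕ)+1:ℝ) + 1) = -(k:ℝ) by ring] at this
    rw [pow_succ, ← ih, mul_comm, ← this]
    push_cast
    ring_nf

lemma coeff_one_add_X_pow (M j : ℕ) :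
    PowerSeries.coeff (R := ℝ) j ((1 + PowerSeries.X) ^ M) = M.choose j := by
  have : ((1:PowerSeries ℝ) + PowerSeries.X) ^ M
      = ∑ k ∈ range (M+1), PowerSeries.X ^ k * 1 ^ (M - k) * (M.choose k : ℝ⟦X⟧) := by
    rw [← add_pow]; ring_nf
  rw [this, map_sum]
  simp only [one_pow, mul_one]
  rw [Finset.sum_congr rfl (fun k _ => by
    rw [show (M.choose k : ℝ⟦X⟧) = PowerSeries.C (R := ℝ) (M.choose k) by push_cast; simp,
      mul_comm, PowerSeries.coeff_C_mul, PowerSeries.coeff_X_pow])]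
  by_cases hj : j ≤ M
  · rw [Finset.sum_eq_single j]
    · simp
    · intro b _ hb; simp [Ne.symm hb]
    · intro h; exact absurd (Finset.mem_range.mpr (Nat.lt_succ_of_le hj)) h
  · push_neg at hj
    rw [Nat.choose_eq_zero_of_lt hj, Finset.sum_eq_zero]
    · simp
    · intro b hb
      have hbj : b ≠ j := by have := Finset.mem_range.mp hb; omega
      rw [if_neg (fun h : j = b => hbj h.symm), mul_zero]

lemma coeff_one_sub_X_pow (N j : ℕ) :
    PowerSeries.coeff (R := ℝ) j ((1 - PowerSeries.X) ^ N) = (-1)^j * N.choose j := by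
  have : ((1:PowerSeries ℝ) - PowerSeries.X) ^ N
      = ∑ k ∈ range (N+1), (-PowerSeries.X) ^ k * 1 ^ (N - k) * (N.choose k : ℝ⟦X⟧) := by
    rw [← add_pow]; ring_nf
  rw [this, map_sum]
  simp only [one_pow, mul_one]
  have step : ∀ k ∈ range (N+1), PowerSeries.coeff (R := ℝ) j ((-PowerSeries.X) ^ k * (N.choose k : ℝ⟦X⟧))
      = (if j = k then (-1)^j * (N.choose k : ℝ) else 0) := by
    intro k _
    have hneg : (-PowerSeries.X : ℝ⟦X⟧) ^ k = PowerSeries.C (R := ℝ) ((-1)^k) * PowerSeries.X ^ k := by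
      rw [map_pow, map_neg, map_one, ← neg_one_mul, mul_pow]
    rw [show ((N.choose k : ℝ⟦X⟧)) = PowerSeries.C (R := ℝ) (N.choose k) by push_cast; simp]
    rw [hneg, mul_assoc, mul_comm, mul_assoc, ← map_mul, mul_comm (PowerSeries.X ^ k),
      PowerSeries.coeff_C_mul, PowerSeries.coeff_X_pow]
    split_ifs with h
    · subst h; ring
    · ring
  rw [Finset.sum_congr rfl step]
  by_cases hj : j ≤ N
  · rw [Finset.sum_eq_single j]
    · simp
    · intro b _ hb; simp [Ne.symm hb]
    · intro h; exact absurd (Finset.mem_range.mpr (Nat.lt_succ_of_le hj)) h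
  · push_neg at hj
    rw [Nat.choose_eq_zero_of_lt hj, Finset.sum_eq_zero]
    · simp
    · intro b hb
      have hbj : j ≠ b := by have := Finset.mem_range.mp hb; omega
      rw [if_neg hbj]

lemma coeff_vanish (M N s : ℕ) (hM : M % 2 = 1) (hMN : M + N = 2 * s) :
    PowerSeries.coeff (R := ℝ) s ((1 + PowerSeries.X) ^ M * (1 - PowerSeries.X) ^ N) = 0 := by
  rw [PowerSeries.coeff_mul, Finset.Nat.sum_antidiagonal_eq_sum_range_succ_mk]
  simp only [coeff_one_add_X_pow, coeff_one_sub_X_pow]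
  refine Finset.sum_involution (fun j _ => if j ≤ M ∧ M - j ≤ s then M - j else j) ?_ ?_ ?_ ?_
  · -- pair sums vanish
    intro j hj
    have hjs : j ≤ s := Nat.lt_succ_iff.mp (Finset.mem_range.mp hj)
    by_cases h : j ≤ M ∧ M - j ≤ s
    · rw [if_pos h]
      obtain ⟨hjM, hMjs⟩ := h
      have hsjN : s - j ≤ N := by omega
      have h1 : M.choose (M - j) = M.choose j := Nat.choose_symm hjM
      have h2 : s - (M - j) = N - (s - j) := by omega
      have h3 : N.choose (N - (s - j)) = N.choose (s - j) := Nat.choose_symm hsjN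
      rw [h1, h2, h3]
      have hNodd : (s - j) + (N - (s - j)) = N := by omega
      have hsign : ((-1:ℝ)) ^ (s - j) + (-1) ^ (N - (s - j)) = 0 := by
        have : ((-1:ℝ)) ^ (s - j) * (-1) ^ (N - (s - j)) = (-1) ^ N := by
          rw [← pow_add, hNodd]
        have hN : Odd N := Nat.odd_iff.mpr (by omega)
        rw [hN.neg_one_pow] at this
        have h4 : ((-1:ℝ)) ^ (s - j) = 1 ∨ ((-1:ℝ)) ^ (s - j) = -1 := neg_one_pow_eq_or ℝ _
        rcases h4 with h4 | h4 <;> rw [h4] at this ⊢ <;> linarith [this]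
      linear_combination ((M.choose j : ℝ) * (N.choose (s - j) : ℝ)) * hsign
    · rw [if_neg h]
      have : (M.choose j : ℝ) * ((-1) ^ (s - j) * (N.choose (s - j))) = 0 := by
        rcases Nat.lt_or_ge M j with hlt | hge
        · rw [Nat.choose_eq_zero_of_lt hlt]; ring
        · have : N < s - j := by omega
          rw [Nat.choose_eq_zero_of_lt this]; ring
      rw [this]; ring
  · -- g a ≠ a when f a ≠ 0
    intro j hj hfj
    by_cases h : j ≤ M ∧ M - j ≤ s
    · rw [if_pos h]; omega
    · rw [if_neg h]
      exfalso
      apply hfj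
      have hjs : j ≤ s := Nat.lt_succ_iff.mp (Finset.mem_range.mp hj)
      rcases Nat.lt_or_ge M j with hlt | hge
      · rw [Nat.choose_eq_zero_of_lt hlt]; ring
      · have : N < s - j := by omega
        rw [Nat.choose_eq_zero_of_lt this]; ring
  · -- membership
    intro j hj
    by_cases h : j ≤ M ∧ M - j ≤ s
    · rw [if_pos h]; exact Finset.mem_range.mpr (by omega)
    · rw [if_neg h]; exact hj
  · -- involutive
    intro j hj
    have hjs : j ≤ s := Nat.lt_succ_iff.mp (Finset.mem_range.mp hj)
    by_cases h : j ≤ M ∧ M - j ≤ s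
    · rw [if_pos h]
      have h2 : M - j ≤ M ∧ M - (M - j) ≤ s := by omega
      rw [if_pos h2]
      omega
    · rw [if_neg h, if_neg h]

lemma coeff_Sser_one (n : ℕ) : PowerSeries.coeff (R := ℝ) n (Sser 1) = 1 := by
  rw [coeff_Sser]
  have : ∏ i ∈ Finset.range n, ((1:ℝ) + i) = n.factorial := by
    rw [← Finset.prod_range_add_one_eq_factorial n]
    push_cast
    exact Finset.prod_congr rfl fun x _ => by ring
  rw [this]
  field_simp

lemma coeff_top (s : ℕ) :
    PowerSeries.coeff (R := ℝ) s ((1 + PowerSeries.X) ^ (2 * s + 1) * Sser 1) = 2 ^ (2 * s) := by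
  rw [PowerSeries.coeff_mul, Finset.Nat.sum_antidiagonal_eq_sum_range_succ_mk]
  simp only [coeff_one_add_X_pow, coeff_Sser_one, mul_one]
  rw [← Nat.cast_sum]
  rw [Nat.sum_range_choose_halfway s]
  rw [show 4 ^ s = 2 ^ (2 * s) by rw [pow_mul]; norm_num]
  push_cast
  ring

noncomputable def Gser (γ : ℝ) (m : ℕ) : PowerSeries ℝ :=
  (1 + PowerSeries.X) ^ m * Sser (γ + 1 + m)

noncomputable def opA (γ : ℝ) (F : PowerSeries ℝ) : PowerSeries ℝ :=
  PowerSeries.C (R := ℝ) (γ + 1) * F +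
    PowerSeries.C (R := ℝ) 2 * (PowerSeries.X * PowerSeries.derivative ℝ F)

lemma coeff_opA (γ : ℝ) (F : PowerSeries ℝ) (n : ℕ) :
    PowerSeries.coeff (R := ℝ) n (opA γ F) = (2 * n + γ + 1) * PowerSeries.coeff (R := ℝ) n F := by
  rw [opA, map_add, PowerSeries.coeff_C_mul, PowerSeries.coeff_C_mul, coeff_X_mul_deriv]
  ring

lemma opA_zero (γ : ℝ) : opA γ 0 = 0 := by simp [opA]

lemma opA_add (γ : ℝ) (F G : PowerSeries ℝ) : opA γ (F + G) = opA γ F + opA γ G := by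
  simp only [opA, map_add]
  ring

lemma opA_C_mul (γ r : ℝ) (F : PowerSeries ℝ) :
    opA γ (PowerSeries.C (R := ℝ) r * F) = PowerSeries.C (R := ℝ) r * opA γ F := by
  simp only [opA]
  rw [Derivation.leibniz, smul_eq_mul, smul_eq_mul, PowerSeries.derivative_C, mul_zero, add_zero]
  ring

lemma opA_sum (γ : ℝ) {ι : Type*} (t : Finset ι) (f : ι → PowerSeries ℝ) :
    opA γ (∑ i ∈ t, f i) = ∑ i ∈ t, opA γ (f i) := by
  induction t using Finset.cons_induction with
  | empty => simp [opA_zero]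
  | cons a t ha ih => rw [Finset.sum_cons, Finset.sum_cons, opA_add, ih]

lemma C2 : PowerSeries.C (R := ℝ) (2 : ℝ) = 2 := by
  rw [map_ofNat]

lemma opA_Gser (γ : ℝ) (m : ℕ) :
    opA γ (Gser γ m) =
      PowerSeries.C (R := ℝ) (γ + 1 + m) * Gser γ (m + 1) - PowerSeries.C (R := ℝ) m * Gser γ (m - 1) := by
  cases m with
  | zero =>
    simp only [Gser, Nat.cast_zero, add_zero, pow_zero, one_mul, map_zero, zero_mul, sub_zero,
      Nat.zero_sub, pow_one, Nat.cast_one]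
    push_cast
    rw [opA, Sser_deriv (γ + 1)]
    rw [show γ + 1 + 1 = γ + 2 by ring]
    rw [Sser_eq (γ + 1), show γ + 1 + 1 = γ + 2 by ring, C2]
    ring
  | succ m =>
    simp only [Gser, Nat.add_sub_cancel]
    push_cast
    rw [show γ + 1 + ((m:ℝ) + 1) = γ + (m:ℝ) + 2 by ring,
      show γ + 1 + ((m:ℝ) + 1 + 1) = γ + (m:ℝ) + 2 + 1 by ring,
      show γ + 1 + (m:ℝ) = γ + (m:ℝ) + 1 by ring]
    rw [opA]
    rw [Derivation.leibniz, smul_eq_mul, smul_eq_mul]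
    rw [Sser_deriv (γ + (m:ℝ) + 2)]
    rw [Derivation.leibniz_pow]
    rw [show PowerSeries.derivative ℝ ((1 : PowerSeries ℝ) + PowerSeries.X) = 1 by
      rw [map_add, PowerSeries.derivative_X]; simp]
    rw [smul_eq_mul, mul_one, Nat.add_sub_cancel, nsmul_eq_mul]
    rw [show ((m + 1 : ℕ) : PowerSeries ℝ) = PowerSeries.C (R := ℝ) ((m:ℝ) + 1) by push_cast; simp]
    rw [C2]
    rw [Sser_eq (γ + (m:ℝ) + 2)]
    rw [Sser_eq (γ + (m:ℝ) + 1), show γ + (m:ℝ) + 1 + 1 = γ + (m:ℝ) + 2 by ring,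
      Sser_eq (γ + (m:ℝ) + 2)]
    rw [show PowerSeries.C (R := ℝ) (γ + (m:ℝ) + 2) = PowerSeries.C (R := ℝ) (γ + 1) + PowerSeries.C (R := ℝ) ((m:ℝ) + 1) by
      rw [← map_add]; ring_nf]
    ring

noncomputable def coefC (γ : ℝ) : ℕ → ℕ → ℝ
  | 0, m => if m = 0 then 1 else 0
  | a+1, m => (if m = 0 then 0 else (γ + m) * coefC γ a (m - 1)) - (m + 1) * coefC γ a (m + 1)

lemma coefC_zero_of_gt (γ : ℝ) : ∀ a m, a < m → coefC γ a m = 0 := by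
  intro a
  induction a with
  | zero =>
    intro m hm
    rw [show coefC γ 0 m = if m = 0 then 1 else 0 from rfl, if_neg (by omega : ¬ m = 0)]
  | succ a ih =>
    intro m hm
    rw [coefC]
    rw [ih (m - 1) (by omega), ih (m + 1) (by omega)]
    simp

lemma coefC_parity (γ : ℝ) : ∀ a m, (a + m) % 2 = 1 → coefC γ a m = 0 := by
  intro a
  induction a with
  | zero =>
    intro m hm
    rw [show coefC γ 0 m = if m = 0 then 1 else 0 from rfl, if_neg (by omega : ¬ m = 0)]
  | succ a ih =>
    intro m hm
    rw [coefC]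
    rw [ih (m + 1) (by omega)]
    rcases Nat.eq_zero_or_pos m with h0 | h0
    · simp [h0]
    · rw [ih (m - 1) (by omega)]
      simp

lemma coefC_top (γ : ℝ) : ∀ a, coefC γ a a = ∏ i ∈ Finset.range a, (γ + 1 + i) := by
  intro a
  induction a with
  | zero => simp [coefC]
  | succ a ih =>
    rw [coefC, if_neg (Nat.succ_ne_zero a), Nat.add_sub_cancel, ih,
      coefC_zero_of_gt γ a (a + 1 + 1) (by omega), Finset.prod_range_succ]
    push_cast
    ring

lemma expand_one (γ : ℝ) (a : ℕ) :
    PowerSeries.mk (fun β => (∏ i ∈ Finset.range β, (γ + 1 + i)) / β.factorial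
        * (2 * β + γ + 1) ^ a)
      = ∑ m ∈ Finset.range (a + 1), PowerSeries.C (R := ℝ) (coefC γ a m) * Gser γ m := by
  induction a with
  | zero =>
    rw [Finset.range_one, Finset.sum_singleton]
    rw [show coefC γ 0 0 = 1 from by simp [coefC], map_one, one_mul]
    ext n
    simp [Gser, PowerSeries.coeff_mk]
  | succ a ih =>
    have step1 : PowerSeries.mk (fun β => (∏ i ∈ Finset.range β, (γ + 1 + i)) / β.factorial
          * (2 * β + γ + 1) ^ (a + 1))
        = opA γ (PowerSeries.mk (fun β => (∏ i ∈ Finset.range β, (γ + 1 + i)) / β.factorial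
          * (2 * β + γ + 1) ^ a)) := by
      ext β
      rw [coeff_opA]
      simp only [PowerSeries.coeff_mk]
      ring
    rw [step1, ih, opA_sum]
    have step2 : ∀ m ∈ Finset.range (a + 1),
        opA γ (PowerSeries.C (R := ℝ) (coefC γ a m) * Gser γ m)
          = PowerSeries.C (R := ℝ) ((γ + 1 + m) * coefC γ a m) * Gser γ (m + 1)
            - PowerSeries.C (R := ℝ) ((m : ℝ) * coefC γ a m) * Gser γ (m - 1) := by
      intro m _
      rw [opA_C_mul, opA_Gser, mul_sub, ← mul_assoc, ← mul_assoc, ← map_mul, ← map_mul]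
      rw [mul_comm (coefC γ a m) (γ + 1 + m), mul_comm (coefC γ a m) (m : ℝ)]
    rw [Finset.sum_congr rfl step2, Finset.sum_sub_distrib]
    -- now transform the RHS target
    have target2 : ∀ m ∈ Finset.range (a + 2),
        PowerSeries.C (R := ℝ) (coefC γ (a + 1) m) * Gser γ m
          = PowerSeries.C (R := ℝ) (if m = 0 then 0 else (γ + m) * coefC γ a (m - 1)) * Gser γ m
            - PowerSeries.C (R := ℝ) (((m : ℝ) + 1) * coefC γ a (m + 1)) * Gser γ m := by
      intro m _
      rw [show coefC γ (a + 1) m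
          = (if m = 0 then 0 else (γ + m) * coefC γ a (m - 1)) - ((m : ℝ) + 1) * coefC γ a (m + 1)
          from by rw [coefC], map_sub, sub_mul]
    rw [Finset.sum_congr rfl target2, Finset.sum_sub_distrib]
    congr 1
    · -- first sums agree
      rw [Finset.sum_range_succ' (fun m => PowerSeries.C (R := ℝ)
          (if m = 0 then 0 else (γ + m) * coefC γ a (m - 1)) * Gser γ m) (a + 1)]
      simp only [if_true, if_false, reduceIte, map_zero, zero_mul, add_zero, Nat.add_sub_cancel]
      apply Finset.sum_congr rfl
      intro k _
      congr 2
      push_cast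
      ring
    · -- second sums agree
      rw [Finset.sum_range_succ' (fun m => PowerSeries.C (R := ℝ) ((m : ℝ) * coefC γ a m) * Gser γ (m - 1)) a]
      simp only [Nat.cast_zero, zero_mul, map_zero, add_zero, Nat.add_sub_cancel]
      rw [Finset.sum_range_succ (fun m => PowerSeries.C (R := ℝ) (((m : ℝ) + 1) * coefC γ a (m + 1)) * Gser γ m) (a + 1)]
      rw [Finset.sum_range_succ (fun m => PowerSeries.C (R := ℝ) (((m : ℝ) + 1) * coefC γ a (m + 1)) * Gser γ m) a]
      rw [coefC_zero_of_gt γ a (a + 1) (by omega), coefC_zero_of_gt γ a (a + 2) (by omega)]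
      simp only [mul_zero, map_zero, zero_mul, add_zero]
      apply Finset.sum_congr rfl
      intro k _
      push_cast
      ring_nf

lemma prod_shift (γ : ℝ) (n : ℕ) :
    ∏ i ∈ Finset.range n, ((n : ℝ) + γ - i) = ∏ i ∈ Finset.range n, (γ + 1 + i) := by
  rw [← Finset.prod_range_reflect (fun j => γ + 1 + (j : ℝ)) n]
  apply Finset.prod_congr rfl
  intro j hj
  have hj' := Finset.mem_range.mp hj
  have : ((n - 1 - j : ℕ) : ℝ) = (n : ℝ) - 1 - j := by
    rw [Nat.cast_sub (by omega), Nat.cast_sub (by omega)]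
    norm_num
  show (n:ℝ) + γ - j = γ + 1 + ((n - 1 - j : ℕ) : ℝ)
  rw [this]
  ring

lemma genChoose_eq (γ : ℝ) (n : ℕ) :
    genChoose ((n : ℝ) + γ) n = (∏ i ∈ Finset.range n, (γ + 1 + i)) / n.factorial := by
  rw [genChoose, prod_shift]

lemma coeff_Sser_neg (x : ℝ) (j : ℕ) :
    PowerSeries.coeff (R := ℝ) j (Sser (-x)) = (-1) ^ j * genChoose x j := by
  rw [coeff_Sser, genChoose]
  have : ∏ i ∈ Finset.range j, (-x + (i : ℝ)) = ∏ i ∈ Finset.range j, (-1) * (x - i) :=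
    Finset.prod_congr rfl fun _ _ => by ring
  rw [this, Finset.prod_mul_distrib, Finset.prod_const, Finset.card_range, mul_div_assoc]

lemma coeff_prod_tuple (d t : ℕ) (f : Fin (d + 1) → PowerSeries ℝ) :
    PowerSeries.coeff (R := ℝ) t (∏ i, f i)
      = ∑ β ∈ Finset.Nat.antidiagonalTuple (d + 1) t, ∏ i, PowerSeries.coeff (R := ℝ) (β i) (f i) := by
  classical
  rw [PowerSeries.coeff_prod]
  refine Finset.sum_nbij' (fun l => (l : Fin (d + 1) → ℕ))
    (fun b => Finsupp.equivFunOnFinite.symm b) ?_ ?_ ?_ ?_ ?_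
  · intro l hl
    rw [Finset.mem_finsuppAntidiag] at hl
    rw [Finset.Nat.mem_antidiagonalTuple]
    exact hl.1
  · intro b hb
    rw [Finset.Nat.mem_antidiagonalTuple] at hb
    rw [Finset.mem_finsuppAntidiag]
    refine ⟨?_, Finset.subset_univ _⟩
    simpa using hb
  · intro l _; exact Finsupp.equivFunOnFinite.symm_apply_apply l
  · intro b _; exact Finsupp.equivFunOnFinite.apply_symm_apply b
  · intro l _; simp

/-- The Heo–Xu identity (KK1) from the theory of cubature formulas. -/
theorem heo_xu_identity (d s : ℕ) (α : Fin (d + 1) → ℕ) (γ : Fin (d + 1) → ℝ)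
    (hα : ∑ i, α i = 2 * s + 1) :
    2 ^ (2 * s) * ∏ i, (((α i).factorial : ℝ) * genChoose ((α i : ℝ) + γ i) (α i)) =
      ∑ j ∈ Finset.range (s + 1), (-1 : ℝ) ^ j *
        genChoose ((d : ℝ) + ∑ i, ((α i : ℝ) + γ i)) j *
        ∑ β ∈ Finset.Nat.antidiagonalTuple (d + 1) (s - j),
          ∏ i, genChoose ((β i : ℝ) + γ i) (β i) * (2 * (β i : ℝ) + γ i + 1) ^ (α i) := by
  classical
  set Xr : ℝ := (d : ℝ) + ∑ i, ((α i : ℝ) + γ i) with hXr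
  set Φ : PowerSeries ℝ := ∏ i, PowerSeries.mk (fun β =>
    (∏ t ∈ Finset.range β, (γ i + 1 + t)) / β.factorial * (2 * β + γ i + 1) ^ (α i)) with hΦ
  have hR1 : ∀ j, ∑ β ∈ Finset.Nat.antidiagonalTuple (d + 1) (s - j),
      ∏ i, genChoose ((β i : ℝ) + γ i) (β i) * (2 * (β i : ℝ) + γ i + 1) ^ (α i)
      = PowerSeries.coeff (R := ℝ) (s - j) Φ := by
    intro j
    rw [hΦ, coeff_prod_tuple]
    apply Finset.sum_congr rfl
    intro β _
    apply Finset.prod_congr rfl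
    intro i _
    rw [PowerSeries.coeff_mk, genChoose_eq]
  have hRHS : (∑ j ∈ Finset.range (s + 1), (-1 : ℝ) ^ j * genChoose Xr j *
        ∑ β ∈ Finset.Nat.antidiagonalTuple (d + 1) (s - j),
          ∏ i, genChoose ((β i : ℝ) + γ i) (β i) * (2 * (β i : ℝ) + γ i + 1) ^ (α i))
      = PowerSeries.coeff (R := ℝ) s (Sser (-Xr) * Φ) := by
    rw [PowerSeries.coeff_mul, Finset.Nat.sum_antidiagonal_eq_sum_range_succ_mk]
    apply Finset.sum_congr rfl
    intro j _
    rw [hR1 j, coeff_Sser_neg]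
  rw [hRHS]
  have hΦ2 : Φ = ∑ m ∈ Fintype.piFinset (fun i => Finset.range (α i + 1)),
      PowerSeries.C (R := ℝ) (∏ i, coefC (γ i) (α i) (m i)) *
        ((1 + PowerSeries.X) ^ (∑ i, m i) *
          Sser ((∑ i, γ i) + ((d + 1 : ℕ) : ℝ) + ((∑ i, m i : ℕ) : ℝ))) := by
    rw [hΦ, Finset.prod_congr rfl (fun i _ => expand_one (γ i) (α i)), Finset.prod_univ_sum]
    apply Finset.sum_congr rfl
    intro m _
    rw [Finset.prod_mul_distrib, ← map_prod]
    congr 1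
    simp only [Gser]
    rw [Finset.prod_mul_distrib, Finset.prod_pow_eq_pow_sum, Sser_prod]
    congr 1
    rw [Finset.sum_add_distrib, Finset.sum_add_distrib, Finset.sum_const, Finset.card_univ,
      Fintype.card_fin]
    push_cast
    ring
  rw [hΦ2, Finset.mul_sum, map_sum]
  have hXr2 : Xr = (d : ℝ) + (2 * s + 1) + ∑ i, γ i := by
    rw [hXr, Finset.sum_add_distrib, ← Nat.cast_sum _ α, hα]
    push_cast
    ring
  have hterm : ∀ m ∈ Fintype.piFinset (fun i => Finset.range (α i + 1)),
      PowerSeries.coeff (R := ℝ) s (Sser (-Xr) * (PowerSeries.C (R := ℝ) (∏ i, coefC (γ i) (α i) (m i)) *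
        ((1 + PowerSeries.X) ^ (∑ i, m i) *
          Sser ((∑ i, γ i) + ((d + 1 : ℕ) : ℝ) + ((∑ i, m i : ℕ) : ℝ)))))
      = if m = α then (∏ i, ∏ t ∈ Finset.range (α i), (γ i + 1 + t)) * 2 ^ (2 * s) else 0 := by
    intro m hmem
    have hrearr : Sser (-Xr) * (PowerSeries.C (R := ℝ) (∏ i, coefC (γ i) (α i) (m i)) *
        ((1 + PowerSeries.X) ^ (∑ i, m i) *
          Sser ((∑ i, γ i) + ((d + 1 : ℕ) : ℝ) + ((∑ i, m i : ℕ) : ℝ))))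
        = PowerSeries.C (R := ℝ) (∏ i, coefC (γ i) (α i) (m i)) *
            ((1 + PowerSeries.X) ^ (∑ i, m i) *
              Sser ((-Xr) + ((∑ i, γ i) + ((d + 1 : ℕ) : ℝ) + ((∑ i, m i : ℕ) : ℝ)))) := by
      rw [← Sser_mul (-Xr) ((∑ i, γ i) + ((d + 1 : ℕ) : ℝ) + ((∑ i, m i : ℕ) : ℝ))]
      ring
    have harg : (-Xr) + ((∑ i, γ i) + ((d + 1 : ℕ) : ℝ) + ((∑ i, m i : ℕ) : ℝ))
        = ((∑ i, m i : ℕ) : ℝ) - 2 * s := by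
      rw [hXr2]
      push_cast
      ring
    rw [hrearr, harg, PowerSeries.coeff_C_mul]
    by_cases hm : m = α
    · subst hm
      rw [if_pos rfl, hα]
      rw [show ((2 * s + 1 : ℕ) : ℝ) - 2 * s = 1 by push_cast; ring]
      rw [coeff_top]
      congr 1
      exact Finset.prod_congr rfl fun i _ => coefC_top (γ i) (m i)
    · rw [if_neg hm]
      by_cases hz : ∃ i, coefC (γ i) (α i) (m i) = 0
      · obtain ⟨i0, h0⟩ := hz
        rw [Finset.prod_eq_zero (Finset.mem_univ i0) h0, zero_mul]
      · push_neg at hz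
        have hle : ∀ i, m i ≤ α i := by
          intro i
          by_contra hp
          exact hz i (coefC_zero_of_gt _ _ _ (by omega))
        have hpar : ∀ i, (α i + m i) % 2 = 0 := by
          intro i
          by_contra hp
          exact hz i (coefC_parity _ _ _ (by omega))
        have hMle : (∑ i, m i) ≤ 2 * s + 1 := hα ▸ Finset.sum_le_sum (fun i _ => hle i)
        have hMne : (∑ i, m i) ≠ 2 * s + 1 := by
          intro hMeq
          apply hm
          funext i
          exact (Finset.sum_eq_sum_iff_of_le (fun i _ => hle i)).mp (hMeq.trans hα.symm) i
            (Finset.mem_univ i)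
        have hModd : (∑ i, m i) % 2 = 1 := by
          have hev : Even (∑ i, (α i + m i)) :=
            Finset.even_sum _ (fun i _ => Nat.even_iff.mpr (hpar i))
          rw [Finset.sum_add_distrib, hα] at hev
          have := Nat.even_iff.mp hev
          omega
        have hS : Sser (((∑ i, m i : ℕ) : ℝ) - 2 * s)
            = (1 - PowerSeries.X) ^ (2 * s - (∑ i, m i)) := by
          rw [show (((∑ i, m i : ℕ) : ℝ) - 2 * s) = -(((2 * s - (∑ i, m i) : ℕ)) : ℝ) by
            rw [Nat.cast_sub (by omega)]; push_cast; ring]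
          exact Sser_neg_nat _
        rw [hS, coeff_vanish _ _ s hModd (by omega), mul_zero]
  rw [Finset.sum_congr rfl hterm, Finset.sum_ite_eq' (Fintype.piFinset fun i => Finset.range (α i + 1))
    α (fun _ => (∏ i, ∏ t ∈ Finset.range (α i), (γ i + 1 + t)) * 2 ^ (2 * s))]
  rw [if_pos (by simp [Fintype.mem_piFinset] : α ∈ Fintype.piFinset fun i => Finset.range (α i + 1))]
  rw [Finset.prod_congr rfl (fun i (_ : i ∈ Finset.univ) => by
    rw [genChoose_eq]
    field_simp : ∀ i ∈ Finset.univ, ((α i).factorial : ℝ) * genChoose ((α i : ℝ) + γ i) (α i)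
      = ∏ t ∈ Finset.range (α i), (γ i + 1 + t))]
  ring
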